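/- Let X consist of N i.i.d. uniform samples in [0,1]^D (D ≥ 1), ρ ∈ (0, 1/4), MinPts = ⌈ρN⌉, and β > 1. For any ε < (1/β)·(1/2)·ρ^{1/D} and any δ > 0, there exists N_ε such that for all N > N_ε, with probability at least 1 - δ, X contains no core points, so DBSCAN returns zero clusters. -/

import Mathlib

open MeasureTheory Set

/-- The unit cube in `ℝ^D` (with the Euclidean metric). -/
def unitCube (D : ℕ) : Set (EuclideanSpace ℝ (Fin D)) :=
  {y | ∀ j, y j ∈ Set.Icc (0 : ℝ) 1}

/-- The law of `N` i.i.d. uniform samples in the unit cube `[0,1]^D`. -/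
noncomputable def unifCube (N D : ℕ) : Measure (Fin N → EuclideanSpace ℝ (Fin D)) :=
  Measure.pi fun _ => volume.restrict (unitCube D)

section DBSCAN

variable {M : Type*} [MetricSpace M]

/-- `p` is a core point of dataset `X`: it belongs to `X` and its closed `ε`-ball contains at
least `minPts` points of `X` (including itself). -/
def IsCore (X : Finset M) (ε : ℝ) (minPts : ℕ) (p : M) : Prop :=
  p ∈ X ∧ minPts ≤ {y : M | y ∈ X ∧ dist p y ≤ ε}.ncard

/-- `q` is density-reachable from `p`: there is a chain in `X` from `p` to `q` whose points
(except possibly the last) are core points, with consecutive distances at most `ε`. -/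
def Reach (X : Finset M) (ε : ℝ) (minPts : ℕ) (p q : M) : Prop :=
  ∃ (t : ℕ) (c : Fin (t + 1) → M), c 0 = p ∧ c (Fin.last t) = q ∧ (∀ i, c i ∈ X) ∧
    ∀ i : Fin t, IsCore X ε minPts (c i.castSucc) ∧ dist (c i.castSucc) (c i.succ) ≤ ε

/-- A DBSCAN cluster: the set of all points density-reachable from some core point. -/
def IsCluster (X : Finset M) (ε : ℝ) (minPts : ℕ) (c : Set M) : Prop :=
  ∃ p, IsCore X ε minPts p ∧ c = {q : M | Reach X ε minPts p q}

/-- The number of clusters DBSCAN produces on `X` with parameters `ε`, `minPts`. -/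
noncomputable def numClusters (X : Finset M) (ε : ℝ) (minPts : ℕ) : ℕ :=
  Set.ncard {c : Set M | IsCluster X ε minPts c}

end DBSCAN

section Aux

open ProbabilityTheory

lemma euclid_coord_dist {D : ℕ} (p y : EuclideanSpace ℝ (Fin D)) (j : Fin D) :
    dist (p j) (y j) ≤ dist p y := by
  rw [EuclideanSpace.dist_eq]
  have h1 : dist (p j) (y j) = Real.sqrt (dist (p j) (y j) ^ 2) :=
    (Real.sqrt_sq dist_nonneg).symm
  rw [h1]
  exact Real.sqrt_le_sqrt (Finset.single_le_sum (f := fun i => dist (p i) (y i) ^ 2)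
    (fun i _ => sq_nonneg _) (Finset.mem_univ j))

lemma measurableSet_coordCube {D : ℕ} (lo hi : Fin D → ℝ) :
    MeasurableSet {y : EuclideanSpace ℝ (Fin D) | ∀ j, y j ∈ Set.Icc (lo j) (hi j)} := by
  have h : {y : EuclideanSpace ℝ (Fin D) | ∀ j, y j ∈ Set.Icc (lo j) (hi j)}
      = ⋂ j, (fun y : EuclideanSpace ℝ (Fin D) => y j) ⁻¹' Set.Icc (lo j) (hi j) := by
    ext y; simp
  rw [h]
  exact MeasurableSet.iInter fun j => (by fun_prop : Measurable fun y : EuclideanSpace ℝ (Fin D) => y j) measurableSet_Icc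

lemma volume_coordCube {D : ℕ} (lo hi : Fin D → ℝ) :
    volume {y : EuclideanSpace ℝ (Fin D) | ∀ j, y j ∈ Set.Icc (lo j) (hi j)}
      = ∏ j, ENNReal.ofReal (hi j - lo j) := by
  have h : {y : EuclideanSpace ℝ (Fin D) | ∀ j, y j ∈ Set.Icc (lo j) (hi j)}
      = (MeasurableEquiv.toLp 2 (Fin D → ℝ)).symm ⁻¹'
        (Set.pi Set.univ fun j => Set.Icc (lo j) (hi j)) := by
    ext y
    simp only [Set.mem_setOf_eq, Set.mem_preimage, Set.mem_pi, Set.mem_univ, true_implies,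
      MeasurableEquiv.coe_toLp_symm]
  rw [h, (EuclideanSpace.volume_preserving_symm_measurableEquiv_toLp (Fin D)).measure_preimage
    ((MeasurableSet.univ_pi fun j => measurableSet_Icc).nullMeasurableSet)]
  rw [volume_pi_pi]
  simp [Real.volume_Icc]

lemma volume_unitCube (D : ℕ) : volume (unitCube D) = 1 := by
  have h : unitCube D = {y : EuclideanSpace ℝ (Fin D) |
      ∀ j, y j ∈ Set.Icc ((fun _ => (0:ℝ)) j) ((fun _ => (1:ℝ)) j)} := rfl
  rw [h, volume_coordCube]
  simp

lemma measurableSet_unitCube (D : ℕ) : MeasurableSet (unitCube D) :=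
  measurableSet_coordCube (fun _ => 0) (fun _ => 1)

instance unitCube_prob (D : ℕ) : IsProbabilityMeasure (volume.restrict (unitCube D)) := by
  constructor
  rw [Measure.restrict_apply_univ, volume_unitCube]

lemma pi_eval_preimage' {E : Type*} [MeasurableSpace E] (μ₀ : Measure E)
    [IsProbabilityMeasure μ₀] {N : ℕ} (i : Fin N) {A : Set E} (hA : MeasurableSet A) :
    Measure.pi (fun _ : Fin N => μ₀) ((fun x => x i) ⁻¹' A) = μ₀ A := by
  classical
  have h : (fun x : Fin N → E => x i) ⁻¹' A
      = Set.pi Set.univ (Function.update (fun _ => Set.univ) i A) := Set.eval_preimage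
  rw [h, Measure.pi_pi]
  have h2 : (fun k => μ₀ (Function.update (fun _ : Fin N => (Set.univ : Set E)) i A k))
      = Function.update (fun _ : Fin N => (1 : ENNReal)) i (μ₀ A) := by
    funext k
    rcases eq_or_ne k i with rfl | hk
    · simp
    · simp [Function.update_of_ne hk]
  rw [h2, Finset.prod_update_of_mem (Finset.mem_univ i)]
  simp

lemma pi_eval_indepFun' {E : Type*} [MeasurableSpace E] (μ₀ : Measure E)
    [IsProbabilityMeasure μ₀] {N : ℕ} {i j : Fin N} (hij : i ≠ j) :
    IndepFun (fun x : Fin N → E => x i) (fun x => x j) (Measure.pi fun _ => μ₀) := by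
  classical
  rw [indepFun_iff_measure_inter_preimage_eq_mul]
  intro A B hA hB
  rw [pi_eval_preimage' μ₀ i hA, pi_eval_preimage' μ₀ j hB]
  have hset : ((fun x : Fin N → E => x i) ⁻¹' A ∩ (fun x => x j) ⁻¹' B)
      = Set.pi Set.univ (fun k => if k = i then A else if k = j then B else Set.univ) := by
    ext x
    simp only [Set.mem_inter_iff, Set.mem_preimage, Set.mem_pi, Set.mem_univ, true_implies]
    constructor
    · rintro ⟨h1, h2⟩ k
      split_ifs with h h'
      · subst h; exact h1
      · subst h'; exact h2
      · trivial
    · intro h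
      refine ⟨?_, ?_⟩
      · have := h i; simpa using this
      · have := h j; simpa [hij.symm] using this
  rw [hset, Measure.pi_pi]
  rw [← Finset.mul_prod_erase Finset.univ _ (Finset.mem_univ i),
    ← Finset.mul_prod_erase _ _ (Finset.mem_erase.mpr ⟨hij.symm, Finset.mem_univ j⟩)]
  have hrest : ∏ k ∈ (Finset.univ.erase i).erase j,
      μ₀ (if k = i then A else if k = j then B else Set.univ) = 1 := by
    apply Finset.prod_eq_one
    intro k hk
    rw [Finset.mem_erase, Finset.mem_erase] at hk
    simp [hk.1, hk.2.1]
  rw [hrest]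
  simp [hij.symm]

lemma pi_integral_eval' {E : Type*} [MeasurableSpace E] (μ₀ : Measure E)
    [IsProbabilityMeasure μ₀] {N : ℕ} (i : Fin N) {f : E → ℝ} (hf : Measurable f) :
    ∫ x, f (x i) ∂(Measure.pi fun _ : Fin N => μ₀) = ∫ y, f y ∂μ₀ := by
  have hmap : (Measure.pi fun _ : Fin N => μ₀).map (fun x => x i) = μ₀ := by
    apply Measure.ext; intro A hA
    rw [Measure.map_apply (measurable_pi_apply i) hA, pi_eval_preimage' μ₀ i hA]
  have h := integral_map (μ := Measure.pi fun _ : Fin N => μ₀)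
    (measurable_pi_apply i).aemeasurable hf.aestronglyMeasurable
  rw [hmap] at h
  exact h.symm

lemma cheb_bound {E : Type*} [MeasurableSpace E] (μ₀ : Measure E) [IsProbabilityMeasure μ₀]
    {C : Set E} (hC : MeasurableSet C) {q₀ γ : ℝ}
    (hq : (μ₀ C).toReal ≤ q₀) (hγ : 0 < γ) {N : ℕ} (hN : 1 ≤ N) :
    Measure.pi (fun _ : Fin N => μ₀)
      {x | (q₀ + γ) * N ≤ ∑ i, C.indicator (fun _ => (1:ℝ)) (x i)}
      ≤ ENNReal.ofReal (1 / (γ ^ 2 * N)) := by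
  classical
  set π := Measure.pi (fun _ : Fin N => μ₀) with hπ
  haveI : IsProbabilityMeasure π := by rw [hπ]; infer_instance
  have hN0 : (0:ℝ) < N := by exact_mod_cast hN
  set f : E → ℝ := C.indicator (fun _ => (1:ℝ)) with hf
  have hfm : Measurable f := measurable_const.indicator hC
  have hfb : ∀ y, ‖f y‖ ≤ 1 := by
    intro y; rw [hf]; by_cases h : y ∈ C
    · simp [Set.indicator_of_mem h]
    · simp [Set.indicator_of_notMem h]
  set X : Fin N → (Fin N → E) → ℝ := fun i x => f (x i) with hX
  have hX2 : ∀ i, MemLp (X i) 2 π := fun i =>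
    MemLp.of_bound ((hfm.comp (measurable_pi_apply i)).aestronglyMeasurable) 1
      (Filter.Eventually.of_forall fun x => hfb (x i))
  set q : ℝ := ∫ y, f y ∂μ₀ with hqdef
  have hq0 : 0 ≤ q := by
    rw [hqdef]; apply integral_nonneg; intro y
    exact Set.indicator_nonneg (by intro _ _; norm_num) y
  have hqq : q ≤ q₀ := by
    rw [hqdef, hf, integral_indicator_const (1:ℝ) hC]; simpa [Measure.real] using hq
  have hXint : ∀ i, ∫ x, X i x ∂π = q := fun i => pi_integral_eval' μ₀ i hfm
  have hES : ∫ x, (∑ i, X i) x ∂π = N * q := by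
    simp_rw [Finset.sum_apply]
    rw [integral_finset_sum _ (fun i _ => ((hX2 i).integrable one_le_two))]
    simp only [hXint]
    rw [Finset.sum_const, Finset.card_univ, Fintype.card_fin, nsmul_eq_mul]
  have hpair : Set.Pairwise ↑(Finset.univ : Finset (Fin N))
      (fun i j => IndepFun (X i) (X j) π) := by
    intro i _ j _ hij
    exact (pi_eval_indepFun' μ₀ hij).comp hfm hfm
  have hvar : variance (∑ i, X i) π = ∑ i, variance (X i) π :=
    IndepFun.variance_sum (fun i _ => hX2 i) hpair
  have hvle : ∀ i, variance (X i) π ≤ 1 := by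
    intro i
    rw [variance_eq_sub (hX2 i)]
    have hpt : ∀ x, (X i ^ 2) x ≤ 1 := by
      intro x
      have h := hfb (x i)
      rw [Real.norm_eq_abs] at h
      have h2 : (f (x i))^2 ≤ 1 := by nlinarith [abs_nonneg (f (x i)), sq_abs (f (x i))]
      simpa [hX] using h2
    have h1 : ∫ x, (X i ^ 2) x ∂π ≤ 1 := by
      calc ∫ x, (X i ^ 2) x ∂π ≤ ∫ _x, (1:ℝ) ∂π :=
        integral_mono ((hX2 i).integrable_sq) (integrable_const 1) hpt
      _ = 1 := by simp
    nlinarith [sq_nonneg (∫ x, X i x ∂π)]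
  have hVarN : variance (∑ i, X i) π ≤ N := by
    rw [hvar]
    calc ∑ i, variance (X i) π ≤ ∑ _i : Fin N, (1:ℝ) :=
      Finset.sum_le_sum (fun i _ => hvle i)
    _ = N := by simp
  have hc0 : (0:ℝ) < γ * N := by positivity
  have hcheb := meas_ge_le_variance_div_sq (μ := π) (X := ∑ i, X i)
    (memLp_finsetSum' Finset.univ (fun i _ => hX2 i)) hc0
  have hsub : {x : Fin N → E | (q₀ + γ) * N ≤ ∑ i, f (x i)}
      ⊆ {x | γ * N ≤ |(∑ i, X i) x - π[∑ i, X i]|} := by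
    intro x hx
    simp only [Set.mem_setOf_eq] at hx ⊢
    have hSx : (∑ i, X i) x = ∑ i, f (x i) := by simp [hX]
    rw [hSx, hES]
    have h : γ * N ≤ (∑ i, f (x i)) - N * q := by nlinarith
    exact h.trans (le_abs_self _)
  calc π {x | (q₀ + γ) * N ≤ ∑ i, f (x i)}
      ≤ π {x | γ * N ≤ |(∑ i, X i) x - π[∑ i, X i]|} := measure_mono hsub
    _ ≤ ENNReal.ofReal (variance (∑ i, X i) π / (γ * N) ^ 2) := hcheb
    _ ≤ ENNReal.ofReal (1 / (γ ^ 2 * N)) := by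
        apply ENNReal.ofReal_le_ofReal
        rw [div_le_div_iff₀ (by positivity) (by positivity)]
        nlinarith [hVarN, variance_nonneg (∑ i, X i) π]

lemma gridCube_cover {D : ℕ} {ε b : ℝ} (hε0 : 0 < ε) (hεb : ε < b)
    {m : ℕ} (hm : ⌈1/(b-ε)⌉₊ ≤ m) {p : EuclideanSpace ℝ (Fin D)} (hp : p ∈ unitCube D) :
    ∃ c : Fin D → Fin (m+1), ∀ y : EuclideanSpace ℝ (Fin D), dist p y ≤ ε →
      ∀ j, y j ∈ Set.Icc (((c j : ℕ) : ℝ) * (b-ε) - b) (((c j : ℕ) : ℝ) * (b-ε) - b + 2*b) := by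
  set s := b - ε with hsdef
  have hs0 : 0 < s := by rw [hsdef]; linarith
  have hcb : ∀ j, ⌊p j / s⌋₊ < m + 1 := by
    intro j
    have hp1 : p j ≤ 1 := (hp j).2
    have h1 : p j / s ≤ 1 / s := by
      exact (div_le_div_iff_of_pos_right hs0).mpr hp1
    have h2 := Nat.floor_le_floor h1
    have h3 := Nat.floor_le_ceil (1/s)
    omega
  refine ⟨fun j => ⟨⌊p j / s⌋₊, hcb j⟩, ?_⟩
  intro y hy j
  have hp0 : 0 ≤ p j := (hp j).1
  have hd : |p j - y j| ≤ ε := by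
    have h := (euclid_coord_dist p y j).trans hy
    rwa [Real.dist_eq] at h
  have habs := abs_le.mp hd
  have hfl : (⌊p j / s⌋₊ : ℝ) * s ≤ p j := by
    have h := Nat.floor_le (show (0:ℝ) ≤ p j / s by positivity)
    calc (⌊p j / s⌋₊ : ℝ) * s ≤ (p j / s) * s := by nlinarith
      _ = p j := div_mul_cancel₀ _ hs0.ne'
  have hfu : p j < (⌊p j / s⌋₊ : ℝ) * s + s := by
    have h := Nat.lt_floor_add_one (p j / s)
    have h2 : p j = (p j / s) * s := (div_mul_cancel₀ _ hs0.ne').symm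
    nlinarith
  simp only [Set.mem_Icc]
  constructor
  · linarith [habs.2, hfl]
  · linarith [habs.1, hfu]

end Aux

open Classical

/-- Zero-cluster concentration in `[0,1]^D`: for `ρ ∈ (0,1/4)`, `MinPts = ⌈ρN⌉`, `β > 1` and
any `0 < ε < (1/β)·(1/2)·ρ^(1/D)` and `δ > 0`, for all large enough `N`, with probability at
least `1-δ` the dataset has no core points, so DBSCAN returns zero clusters. -/
theorem dbscan_zero_clusters_whp_cube (D : ℕ) (hD : 1 ≤ D)
    (ρ : ℝ) (hρ : ρ ∈ Set.Ioo (0 : ℝ) (1/4)) (β : ℝ) (hβ : 1 < β)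
    (ε : ℝ) (hε0 : 0 < ε) (hε : ε < (1/β) * (1/2) * ρ ^ ((1 : ℝ) / D)) (δ : ℝ) (hδ : 0 < δ) :
    ∃ N₀ : ℕ, ∀ N : ℕ, N₀ < N →
      ENNReal.ofReal (1 - δ) ≤
        unifCube N D {x : Fin N → EuclideanSpace ℝ (Fin D) |
          (∀ p, ¬ IsCore (Finset.image x Finset.univ) ε ⌈ρ * N⌉₊ p) ∧
          numClusters (Finset.image x Finset.univ) ε ⌈ρ * N⌉₊ = 0} := by
  classical
  obtain ⟨hρ0, hρ4⟩ := hρ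
  have hβ0 : (0:ℝ) < β := lt_trans one_pos hβ
  have hsβ : 1 < Real.sqrt β := by
    have h := Real.sqrt_lt_sqrt zero_le_one hβ
    simpa using h
  set b := ε * Real.sqrt β with hbdef
  have hεb : ε < b := by rw [hbdef]; nlinarith
  have hb0 : 0 < b := hε0.trans hεb
  set P := ρ ^ ((1:ℝ)/D) with hPdef
  have hP0 : 0 < P := Real.rpow_pos_of_pos hρ0 _
  have h2b : 2 * b < P := by
    have hsq0 : (0:ℝ) < Real.sqrt β := by linarith
    have hβlt : Real.sqrt β < β := by nlinarith [Real.mul_self_sqrt hβ0.le]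
    have h2 : 2 * Real.sqrt β * ε < 2 * Real.sqrt β * ((1/β) * (1/2) * P) :=
      mul_lt_mul_of_pos_left hε (by positivity)
    have h3 : 2 * Real.sqrt β * ((1/β) * (1/2) * P) = (Real.sqrt β / β) * P := by ring
    have h4 : Real.sqrt β / β < 1 := (div_lt_one hβ0).mpr hβlt
    have h5 : (Real.sqrt β / β) * P < 1 * P := mul_lt_mul_of_pos_right h4 hP0
    calc 2 * b = 2 * Real.sqrt β * ε := by rw [hbdef]; ring
    _ < (Real.sqrt β / β) * P := by rw [← h3]; exact h2
    _ < 1 * P := h5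
    _ = P := one_mul P
  have hDne : (D:ℝ) ≠ 0 := Nat.cast_ne_zero.mpr (by omega)
  have hPD : P ^ D = ρ := by
    rw [hPdef, ← Real.rpow_natCast (ρ ^ ((1:ℝ)/D)) D, ← Real.rpow_mul hρ0.le]
    rw [one_div, inv_mul_cancel₀ hDne, Real.rpow_one]
  set q₀ := (2*b)^D with hq₀def
  have hq₀ρ : q₀ < ρ := by
    rw [hq₀def, ← hPD]
    exact pow_lt_pow_left₀ h2b (by positivity) (by omega)
  have hq₀0 : 0 < q₀ := by positivity
  set γ := ρ - q₀ with hγdef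
  have hγ0 : 0 < γ := by rw [hγdef]; linarith
  set m := ⌈1/(b-ε)⌉₊ with hmdef
  set K := ((Fintype.card (Fin D → Fin (m+1))) : ℝ) with hKdef
  have hK0 : 0 < K := by
    have h : 0 < Fintype.card (Fin D → Fin (m+1)) := Fintype.card_pos
    rw [hKdef]; exact_mod_cast h
  refine ⟨max 1 ⌈K / (γ^2 * δ)⌉₊, fun N hN => ?_⟩
  have hN1 : 1 ≤ N := le_trans (le_max_left _ _) hN.le
  have hN0 : (0:ℝ) < N := by exact_mod_cast lt_of_lt_of_le one_pos (by exact_mod_cast hN1)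
  have hNδ : K / (γ^2 * N) ≤ δ := by
    have h1 : (⌈K / (γ^2 * δ)⌉₊ : ℝ) < N := by
      exact_mod_cast lt_of_le_of_lt (le_max_right 1 _) hN
    have h2 : K / (γ^2 * δ) ≤ N := (Nat.le_ceil _).trans h1.le
    rw [div_le_iff₀ (by positivity)]
    rw [div_le_iff₀ (by positivity)] at h2
    nlinarith
  set μ₀ := volume.restrict (unitCube D) with hμ₀
  haveI : IsProbabilityMeasure μ₀ := unitCube_prob D
  have hunif : unifCube N D = Measure.pi fun _ : Fin N => μ₀ := rfl
  haveI : IsProbabilityMeasure (unifCube N D) := by rw [hunif]; infer_instance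
  set Cb : (Fin D → Fin (m+1)) → Set (EuclideanSpace ℝ (Fin D)) := fun c =>
    {y | ∀ j, y j ∈ Set.Icc (((c j : ℕ) : ℝ) * (b-ε) - b)
      (((c j : ℕ) : ℝ) * (b-ε) - b + 2*b)} with hCbdef
  have hCmeas : ∀ c, MeasurableSet (Cb c) := fun c => measurableSet_coordCube _ _
  have hCvol : ∀ c, (μ₀ (Cb c)).toReal ≤ q₀ := by
    intro c
    have h2 : volume (Cb c) = ENNReal.ofReal q₀ := by
      rw [hCbdef]
      rw [volume_coordCube]
      simp only [add_sub_cancel_left]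
      rw [Finset.prod_const, Finset.card_univ, Fintype.card_fin, hq₀def,
        ENNReal.ofReal_pow (by linarith)]
    have h1 : μ₀ (Cb c) ≤ ENNReal.ofReal q₀ := by
      rw [hμ₀, Measure.restrict_apply (hCmeas c), ← h2]
      exact measure_mono Set.inter_subset_left
    calc (μ₀ (Cb c)).toReal ≤ (ENNReal.ofReal q₀).toReal :=
      ENNReal.toReal_mono (by simp) h1
    _ = q₀ := ENNReal.toReal_ofReal hq₀0.le
  have hBad : ∀ c, unifCube N D {x | ρ * N ≤ ∑ i, (Cb c).indicator (fun _ => (1:ℝ)) (x i)}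
      ≤ ENNReal.ofReal (1 / (γ^2 * N)) := by
    intro c
    have h := cheb_bound μ₀ (hCmeas c) (hCvol c) hγ0 hN1
    rw [show q₀ + γ = ρ by rw [hγdef]; ring] at h
    rw [hunif]
    exact h
  have hA : unifCube N D {x : Fin N → EuclideanSpace ℝ (Fin D) | ∀ i, x i ∈ unitCube D} = 1 := by
    have h1 : {x : Fin N → EuclideanSpace ℝ (Fin D) | ∀ i, x i ∈ unitCube D}
        = Set.pi Set.univ (fun _ => unitCube D) := by ext x; simp [Set.mem_pi]
    rw [hunif, h1, Measure.pi_pi]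
    have h2 : μ₀ (unitCube D) = 1 := by
      rw [hμ₀, Measure.restrict_apply (measurableSet_unitCube D), Set.inter_self,
        volume_unitCube]
    simp [h2]
  set Good : Set (Fin N → EuclideanSpace ℝ (Fin D)) :=
    {x | ∀ i, x i ∈ unitCube D} ∩ ⋂ c : Fin D → Fin (m+1),
      {x | ρ * N ≤ ∑ i, (Cb c).indicator (fun _ => (1:ℝ)) (x i)}ᶜ with hGooddef
  have hAmeas : MeasurableSet {x : Fin N → EuclideanSpace ℝ (Fin D) | ∀ i, x i ∈ unitCube D} := by
    have h : {x : Fin N → EuclideanSpace ℝ (Fin D) | ∀ i, x i ∈ unitCube D}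
        = ⋂ i, (fun x : Fin N → EuclideanSpace ℝ (Fin D) => x i) ⁻¹' unitCube D := by
      ext x; simp
    rw [h]
    exact MeasurableSet.iInter fun i => (measurable_pi_apply i) (measurableSet_unitCube D)
  have hBmeas : ∀ c : Fin D → Fin (m+1),
      MeasurableSet {x : Fin N → EuclideanSpace ℝ (Fin D) |
        ρ * N ≤ ∑ i, (Cb c).indicator (fun _ => (1:ℝ)) (x i)} := by
    intro c
    have hm : Measurable fun x : Fin N → EuclideanSpace ℝ (Fin D) =>
        ∑ i, (Cb c).indicator (fun _ => (1:ℝ)) (x i) :=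
      Finset.measurable_sum _ fun i _ =>
        (measurable_const.indicator (hCmeas c)).comp (measurable_pi_apply i)
    exact measurableSet_le measurable_const hm
  have hGoodMeas : MeasurableSet Good := by
    rw [hGooddef]
    exact hAmeas.inter (MeasurableSet.iInter fun c => (hBmeas c).compl)
  have hcompl : unifCube N D Goodᶜ ≤ ENNReal.ofReal δ := by
    have hgc : Goodᶜ = {x : Fin N → EuclideanSpace ℝ (Fin D) | ∀ i, x i ∈ unitCube D}ᶜ
        ∪ ⋃ c : Fin D → Fin (m+1),
          {x | ρ * N ≤ ∑ i, (Cb c).indicator (fun _ => (1:ℝ)) (x i)} := by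
      rw [hGooddef, Set.compl_inter, Set.compl_iInter]
      simp
    rw [hgc]
    calc unifCube N D ({x : Fin N → EuclideanSpace ℝ (Fin D) | ∀ i, x i ∈ unitCube D}ᶜ
          ∪ ⋃ c : Fin D → Fin (m+1),
            {x | ρ * N ≤ ∑ i, (Cb c).indicator (fun _ => (1:ℝ)) (x i)})
        ≤ unifCube N D {x : Fin N → EuclideanSpace ℝ (Fin D) | ∀ i, x i ∈ unitCube D}ᶜ
          + unifCube N D (⋃ c : Fin D → Fin (m+1),
            {x | ρ * N ≤ ∑ i, (Cb c).indicator (fun _ => (1:ℝ)) (x i)}) := measure_union_le _ _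
      _ ≤ 0 + ∑ c : Fin D → Fin (m+1), unifCube N D
            {x | ρ * N ≤ ∑ i, (Cb c).indicator (fun _ => (1:ℝ)) (x i)} := by
          apply add_le_add
          · have h0 : unifCube N D {x : Fin N → EuclideanSpace ℝ (Fin D) |
                ∀ i, x i ∈ unitCube D}ᶜ = 0 := by
              rw [measure_compl hAmeas (measure_ne_top _ _), hA, measure_univ]
              simp
            exact h0.le
          · exact measure_iUnion_fintype_le _ _
      _ ≤ 0 + ∑ _c : Fin D → Fin (m+1), ENNReal.ofReal (1 / (γ^2 * N)) := by
          apply add_le_add le_rfl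
          exact Finset.sum_le_sum fun c _ => hBad c
      _ = ENNReal.ofReal (K * (1 / (γ^2 * N))) := by
          rw [zero_add, Finset.sum_const, Finset.card_univ, nsmul_eq_mul, hKdef]
          rw [← ENNReal.ofReal_natCast (Fintype.card (Fin D → Fin (m+1))),
            ← ENNReal.ofReal_mul (by positivity)]
      _ ≤ ENNReal.ofReal δ := by
          apply ENNReal.ofReal_le_ofReal
          calc K * (1 / (γ^2 * N)) = K / (γ^2 * N) := by ring
          _ ≤ δ := hNδ
  have hGoodProb : ENNReal.ofReal (1 - δ) ≤ unifCube N D Good := by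
    rcases le_or_gt 1 δ with h1δ | h1δ
    · have : ENNReal.ofReal (1 - δ) = 0 := by
        rw [ENNReal.ofReal_eq_zero]; linarith
      rw [this]; exact zero_le
    · have hsum : unifCube N D Good + unifCube N D Goodᶜ = 1 := by
        rw [measure_add_measure_compl hGoodMeas, measure_univ]
      have he : ENNReal.ofReal (1 - δ) + ENNReal.ofReal δ = 1 := by
        rw [← ENNReal.ofReal_add (by linarith) hδ.le]
        norm_num
      have hle : ENNReal.ofReal (1 - δ) + ENNReal.ofReal δ
          ≤ unifCube N D Good + ENNReal.ofReal δ := by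
        rw [he, ← hsum]
        exact add_le_add le_rfl hcompl
      exact (ENNReal.add_le_add_iff_right ENNReal.ofReal_ne_top).mp hle
  refine le_trans hGoodProb (measure_mono ?_)
  intro x hx
  rw [hGooddef] at hx
  obtain ⟨hxA, hxB⟩ := hx
  have hxB' : ∀ c : Fin D → Fin (m+1),
      ∑ i, (Cb c).indicator (fun _ => (1:ℝ)) (x i) < ρ * N := by
    intro c
    have h := Set.mem_iInter.mp hxB c
    rw [Set.mem_compl_iff, Set.mem_setOf_eq] at h
    linarith [lt_of_not_ge h]
  have hnocore : ∀ p, ¬ IsCore (Finset.image x Finset.univ) ε ⌈ρ * N⌉₊ p := by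
    intro p hcore
    obtain ⟨hpX, hpcard⟩ := hcore
    obtain ⟨i, -, hxi⟩ := Finset.mem_image.mp hpX
    have hpC : p ∈ unitCube D := hxi ▸ hxA i
    obtain ⟨c, hc⟩ := gridCube_cover hε0 hεb (le_of_eq hmdef.symm) hpC
    set XS := Finset.image x Finset.univ with hXSdef
    have hsub : {y | y ∈ XS ∧ dist p y ≤ ε} ⊆ ↑(XS.filter (· ∈ Cb c)) := by
      rintro y ⟨hy1, hy2⟩
      simp only [Finset.coe_filter, Set.mem_setOf_eq]
      exact ⟨hy1, hc y hy2⟩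
    have h1 : {y | y ∈ XS ∧ dist p y ≤ ε}.ncard ≤ (XS.filter (· ∈ Cb c)).card := by
      have h := Set.ncard_le_ncard hsub (Finset.finite_toSet _)
      rwa [Set.ncard_coe_finset] at h
    have h2 : XS.filter (· ∈ Cb c) ⊆ (Finset.univ.filter (fun i => x i ∈ Cb c)).image x := by
      intro y hy
      rw [Finset.mem_filter] at hy
      obtain ⟨hy1, hy2⟩ := hy
      obtain ⟨i', -, rfl⟩ := Finset.mem_image.mp hy1
      exact Finset.mem_image.mpr ⟨i', Finset.mem_filter.mpr ⟨Finset.mem_univ i', hy2⟩, rfl⟩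
    have h3 : (XS.filter (· ∈ Cb c)).card ≤ (Finset.univ.filter (fun i => x i ∈ Cb c)).card :=
      (Finset.card_le_card h2).trans Finset.card_image_le
    have h4 : ((Finset.univ.filter (fun i => x i ∈ Cb c)).card : ℝ)
        = ∑ i, (Cb c).indicator (fun _ => (1:ℝ)) (x i) := by
      have h5 : ∑ i, (Cb c).indicator (fun _ => (1:ℝ)) (x i)
          = ∑ i, if x i ∈ Cb c then (1:ℝ) else 0 :=
        Finset.sum_congr rfl fun i _ => Set.indicator_apply _ _ _
      rw [h5, Finset.sum_boole]
    have h6 : (⌈ρ * N⌉₊ : ℝ) ≤ ({y | y ∈ XS ∧ dist p y ≤ ε}.ncard : ℝ) := by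
      exact_mod_cast hpcard
    have h7 : ρ * N ≤ (⌈ρ * N⌉₊ : ℝ) := Nat.le_ceil _
    have h8 := hxB' c
    have h9 : (({y | y ∈ XS ∧ dist p y ≤ ε}.ncard : ℝ))
        ≤ ((Finset.univ.filter (fun i => x i ∈ Cb c)).card : ℝ) := by
      exact_mod_cast le_trans h1 h3
    linarith [h4 ▸ h9]
  refine ⟨hnocore, ?_⟩
  have hempty : {cl : Set (EuclideanSpace ℝ (Fin D)) |
      IsCluster (Finset.image x Finset.univ) ε ⌈ρ * N⌉₊ cl} = ∅ := by
    ext cl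
    simp only [Set.mem_setOf_eq, Set.mem_empty_iff_false, iff_false]
    rintro ⟨p, hp, -⟩
    exact hnocore p hp
  rw [numClusters, hempty, Set.ncard_empty]
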